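/- Let v₁, …, v_{n−1} be linearly independent unit vectors in ℝⁿ and let T ⊆ {1, …, n−1} be any subset of indices. Then there exists a unit vector v_n ∈ ℝⁿ such that the family v₁, …, v_{n−1}, v_n is linearly independent and, for each i ∈ {1, …, n−1}, ⟨v_n, v_i⟩ = 0 if and only if i ∈ T. -/

import Mathlib

open RealInnerProductSpace

/-- **Induction step for orthogonal co-representations.** Given `n` linearly independent
unit vectors `v 0, …, v (n-1)` in `ℝ^(n+1)` and any set `T` of indices, there is a unit
vector `w ∈ ℝ^(n+1)` such that the extended family `v 0, …, v (n-1), w` is linearly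
independent and, for each index `i`, `⟪w, v i⟫ = 0` iff `i ∈ T`.

(This is the statement "given `n-1` linearly independent unit vectors in `ℝⁿ` …", with the
ambient dimension written as `n + 1` so that there are `n` given vectors.) -/
theorem exists_unit_vector_orthogonal_iff_mem
    (n : ℕ) (v : Fin n → EuclideanSpace ℝ (Fin (n + 1)))
    (hunit : ∀ i, ‖v i‖ = 1) (hli : LinearIndependent ℝ v)
    (T : Set (Fin n)) :
    ∃ w : EuclideanSpace ℝ (Fin (n + 1)), ‖w‖ = 1 ∧
      LinearIndependent ℝ (Fin.snoc v w : Fin (n + 1) → EuclideanSpace ℝ (Fin (n + 1))) ∧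
      ∀ i : Fin n, (⟪w, v i⟫ = 0 ↔ i ∈ T) := by
  classical
  set S : Submodule ℝ (EuclideanSpace ℝ (Fin (n + 1))) :=
    Submodule.span ℝ (Set.range v) with hS
  have hfinE : Module.finrank ℝ (EuclideanSpace ℝ (Fin (n + 1))) = n + 1 :=
    finrank_euclideanSpace_fin
  have hfinS : Module.finrank ℝ S = n := by
    rw [hS, finrank_span_eq_card hli]; simp
  have hfinOrth : Module.finrank ℝ (Sᗮ) = 1 := by
    have := S.finrank_add_finrank_orthogonal
    omega
  obtain ⟨u0, hu0mem, hu0ne⟩ : ∃ u0 ∈ Sᗮ, u0 ≠ 0 := by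
    have : Sᗮ ≠ ⊥ := by
      intro h
      rw [h] at hfinOrth
      simp at hfinOrth
    exact Submodule.exists_mem_ne_zero_of_ne_bot this
  set u : EuclideanSpace ℝ (Fin (n + 1)) := ‖u0‖⁻¹ • u0 with hu
  have hu0norm : ‖u0‖ ≠ 0 := norm_ne_zero_iff.mpr hu0ne
  have humem : u ∈ Sᗮ := Submodule.smul_mem _ _ hu0mem
  have hunorm : ‖u‖ = 1 := by
    rw [hu, norm_smul, norm_inv, norm_norm, inv_mul_cancel₀ hu0norm]
  have huv : ∀ i, ⟪u, v i⟫ = 0 := fun i =>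
    (Submodule.mem_orthogonal' S u).mp humem (v i) (Submodule.subset_span ⟨i, rfl⟩)
  set f : EuclideanSpace ℝ (Fin (n + 1)) →ₗ[ℝ] (Fin n → ℝ) :=
    LinearMap.pi (fun i => (innerSL ℝ (v i)).toLinearMap) with hf
  have hker : LinearMap.ker f = Sᗮ := by
    ext x
    simp only [LinearMap.mem_ker, hf, LinearMap.pi_apply, funext_iff]
    constructor
    · intro h
      rw [hS, Submodule.mem_orthogonal]
      intro y hy
      induction hy using Submodule.span_induction with
      | mem y hy => obtain ⟨i, rfl⟩ := hy; exact h i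
      | zero => simp
      | add a b _ _ ha hb => rw [inner_add_left, ha, hb, add_zero]
      | smul c a _ ha => rw [inner_smul_left, ha, mul_zero]
    · intro h i
      exact (Submodule.mem_orthogonal S x).mp h (v i) (Submodule.subset_span ⟨i, rfl⟩)
  have hsurj : Function.Surjective f := by
    rw [← LinearMap.range_eq_top]
    apply Submodule.eq_top_of_finrank_eq
    have := f.finrank_range_add_finrank_ker
    rw [hker, hfinOrth, hfinE] at this
    rw [Module.finrank_fintype_fun_eq_card]
    simp only [Fintype.card_fin]
    omega
  obtain ⟨z, hz⟩ := hsurj (fun i => if i ∈ T then 0 else 1)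
  set z' : EuclideanSpace ℝ (Fin (n + 1)) := ((S.orthogonalProjection z : S) : EuclideanSpace ℝ (Fin (n + 1))) with hz'
  have hzv : ∀ i, ⟪v i, z'⟫ = (if i ∈ T then (0:ℝ) else 1) := by
    intro i
    have hsub : z - z' ∈ Sᗮ := S.sub_starProjection_mem_orthogonal z
    have hvi : v i ∈ S := Submodule.subset_span ⟨i, rfl⟩
    have h0 : ⟪v i, z - z'⟫ = 0 := (Submodule.mem_orthogonal S (z - z')).mp hsub (v i) hvi
    have hzz : ⟪v i, z⟫ = ⟪v i, z'⟫ := by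
      rw [inner_sub_right] at h0; linarith
    rw [← hzz]
    have := congrFun hz i
    simpa [hf] using this
  have huz' : ⟪u, z'⟫ = 0 :=
    (Submodule.mem_orthogonal' S u).mp humem z' (Submodule.coe_mem _)
  set w0 : EuclideanSpace ℝ (Fin (n + 1)) := z' + u with hw0
  have hw0ne : w0 ≠ 0 := by
    intro h
    have h1 : ⟪u, w0⟫ = 1 := by
      rw [hw0, inner_add_right, huz', zero_add, real_inner_self_eq_norm_sq, hunorm]
      norm_num
    rw [h, inner_zero_right] at h1
    norm_num at h1
  have hw0norm : ‖w0‖ ≠ 0 := norm_ne_zero_iff.mpr hw0ne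
  refine ⟨‖w0‖⁻¹ • w0, ?_, ?_, ?_⟩
  · rw [norm_smul, norm_inv, norm_norm, inv_mul_cancel₀ hw0norm]
  · rw [linearIndependent_fin_snoc]
    refine ⟨hli, fun hmem => ?_⟩
    have h1 : ⟪u, ‖w0‖⁻¹ • w0⟫ = 0 :=
      (Submodule.mem_orthogonal' S u).mp humem _ hmem
    rw [inner_smul_right, hw0, inner_add_right, huz', zero_add,
      real_inner_self_eq_norm_sq, hunorm] at h1
    simp [hw0norm] at h1
    exact hw0ne h1
  · intro i
    have hcalc : ⟪(‖w0‖⁻¹ • w0 : EuclideanSpace ℝ (Fin (n + 1))), v i⟫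
        = ‖w0‖⁻¹ * (if i ∈ T then (0:ℝ) else 1) := by
      have hzv2 : ⟪z', v i⟫ = (if i ∈ T then (0:ℝ) else 1) := by
        rw [real_inner_comm]; exact hzv i
      rw [inner_smul_left, hw0, inner_add_left, huv i, hzv2]
      simp
    rw [hcalc]
    constructor
    · intro h
      by_contra hT
      simp [hT, hw0norm] at h
    · intro h
      simp [h]
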